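/- Suppose the cutoff-threshold function μ₂ ↦ C(μ₁•, μ₂; γ) is Lipschitz continuous with constant ℓ where 0 < ℓ < 1/γ. Then the iteration map I(μ₂) := μ₂• − γ(μ₁• − E[X₁ | X₁ ≤ C(μ₁•, μ₂; γ)]), with X₁ ~ N(μ₁•, σ²), is a contraction mapping on ℝ with contraction constant γℓ ∈ (0,1). In particular I has a unique fixed point. -/

import Mathlib

open MeasureTheory Set

/-- Gaussian density with mean `a` and variance `s2`. -/
noncomputable def gauss (a s2 x : ℝ) : ℝ :=
  (Real.sqrt (2 * Real.pi * s2))⁻¹ * Real.exp (-(x - a) ^ 2 / (2 * s2))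

/-- Mean of a `N(a, s2)` random variable truncated above at `c`, i.e. `E[X | X ≤ c]`. -/
noncomputable def truncMean (a s2 c : ℝ) : ℝ :=
  (∫ x in Iic c, x * gauss a s2 x) / (∫ x in Iic c, gauss a s2 x)

open Filter Real

noncomputable def phi (z : ℝ) : ℝ := (Real.sqrt (2 * Real.pi))⁻¹ * Real.exp (-z ^ 2 / 2)
noncomputable def Phi (z : ℝ) : ℝ := ∫ t in Iic z, phi t
lemma phi_pos (z : ℝ) : 0 < phi z := by unfold phi; positivity

lemma integrable_phi : Integrable phi := by
  have : Integrable (fun z : ℝ => Real.exp (-(1/2 : ℝ) * z ^ 2)) :=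
    integrable_exp_neg_mul_sq (by norm_num)
  have h := this.const_mul (Real.sqrt (2 * Real.pi))⁻¹
  refine h.congr (Eventually.of_forall fun z => ?_)
  unfold phi; ring_nf

lemma integrable_mul_phi : Integrable (fun z => z * phi z) := by
  have : Integrable (fun z : ℝ => z * Real.exp (-(1/2 : ℝ) * z ^ 2)) := by
    simpa using integrable_rpow_mul_exp_neg_mul_sq (b := 1/2) (by norm_num) (s := 1) (by norm_num)
  have h := this.const_mul (Real.sqrt (2 * Real.pi))⁻¹
  refine h.congr (Eventually.of_forall fun z => ?_)
  unfold phi; ring_nf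

lemma continuous_phi : Continuous phi := by unfold phi; fun_prop

lemma hasDerivAt_phi (z : ℝ) : HasDerivAt phi (-z * phi z) z := by
  have h1 : HasDerivAt (fun z : ℝ => -z ^ 2 / 2) (-z) z := by
    have := (hasDerivAt_pow 2 z).neg.div_const 2
    simpa using this.congr_deriv (by ring)
  have := ((h1.exp).const_mul (Real.sqrt (2 * Real.pi))⁻¹)
  unfold phi
  refine this.congr_deriv ?_
  ring

lemma Phi_pos (z : ℝ) : 0 < Phi z := by
  unfold Phi
  apply setIntegral_pos_iff_support_of_nonneg_ae ?_ (integrable_phi.integrableOn) |>.2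
  · have : (Function.support phi) = univ := by
      ext x; simp [Function.support, (phi_pos x).ne']
    rw [this]
    simpa using measure_Iic_pos (volume : Measure ℝ) z
  · exact Eventually.of_forall fun x => (phi_pos x).le

lemma Phi_sub (v w : ℝ) (h : v ≤ w) : Phi w = Phi v + ∫ t in Ioc v w, phi t := by
  unfold Phi
  rw [← setIntegral_union (Iic_disjoint_Ioc le_rfl) measurableSet_Ioc
      integrable_phi.integrableOn integrable_phi.integrableOn, Iic_union_Ioc_eq_Iic h]

lemma key_Phi (w : ℝ) : Phi w = Phi 0 + ∫ t in (0:ℝ)..w, phi t := by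
  rcases le_or_gt 0 w with h | h
  · rw [intervalIntegral.integral_of_le h, Phi_sub 0 w h]
  · rw [intervalIntegral.integral_of_ge h.le]
    have := Phi_sub w 0 h.le
    linarith

lemma hasDerivAt_Phi (z : ℝ) : HasDerivAt Phi (phi z) z := by
  have : HasDerivAt (fun w => Phi 0 + ∫ t in (0:ℝ)..w, phi t) (phi z) z :=
    (intervalIntegral.integral_hasDerivAt_right integrable_phi.intervalIntegrable
      (continuous_phi.stronglyMeasurableAtFilter _ _) continuous_phi.continuousAt).const_add _
  exact this.congr_of_eventuallyEq (Eventually.of_forall fun w => (key_Phi w))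

lemma integral_mul_phi_Iic (z : ℝ) : ∫ t in Iic z, t * phi t = -phi z := by
  have := MeasureTheory.integral_Iic_of_hasDerivAt_of_tendsto' (f := fun t => -phi t)
    (f' := fun t => t * phi t) (a := z) (m := 0)
    (fun x _ => by exact (hasDerivAt_phi x).neg.congr_deriv (by ring))
    (integrable_mul_phi.integrableOn)
    ?_
  · simpa using this
  · have h0 : Tendsto (fun t : ℝ => -t ^ 2 / 2) atBot atBot := by
      refine tendsto_atBot_mono' atBot ?_ tendsto_id
      filter_upwards [eventually_le_atBot (-2 : ℝ)] with t ht
      show -t ^ 2 / 2 ≤ t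
      nlinarith
    have h1 : Tendsto (fun t : ℝ => Real.exp (-t ^ 2 / 2)) atBot (nhds 0) :=
      Real.tendsto_exp_atBot.comp h0
    have h2 := (h1.const_mul (Real.sqrt (2 * Real.pi))⁻¹).neg
    simpa [phi] using h2

lemma mills_upper {z : ℝ} (hz : z < 0) : Phi z ≤ phi z / (-z) := by
  have h1 : Phi z ≤ ∫ t in Iic z, (t / z) * phi t := by
    refine setIntegral_mono_on integrable_phi.integrableOn
      ((integrable_mul_phi.div_const z).congr (Eventually.of_forall fun t => by ring)).integrableOn
      measurableSet_Iic (fun t ht => ?_)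
    have h2 : (1 : ℝ) ≤ t / z := by
      rw [le_div_iff_of_neg hz]
      simpa using ht
    nlinarith [phi_pos t]
  have h3 : ∫ t in Iic z, (t / z) * phi t = phi z / (-z) := by
    have : ∫ t in Iic z, (t / z) * phi t = (∫ t in Iic z, t * phi t) / z := by
      rw [← integral_div]
      exact setIntegral_congr_fun measurableSet_Iic (fun t _ => by ring)
    rw [this, integral_mul_phi_Iic, div_neg, neg_div]
  linarith [h1, h3.le, h3.ge]

lemma zPhi_add_phi_nonneg (z : ℝ) : 0 ≤ z * Phi z + phi z := by
  rcases le_or_gt 0 z with h | h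
  · have := Phi_pos z; have := phi_pos z; nlinarith
  · have h1 := mills_upper h
    have h2 : z * Phi z ≥ z * (phi z / (-z)) := by
      apply mul_le_mul_of_nonpos_left h1 h.le
    have h3 : z * (phi z / (-z)) = -phi z := by
      rw [mul_div_assoc', div_eq_iff (neg_ne_zero.mpr h.ne)]
      ring
    linarith

lemma tendsto_phi_atBot : Tendsto phi atBot (nhds 0) := by
  have h0 : Tendsto (fun t : ℝ => -t ^ 2 / 2) atBot atBot := by
    refine tendsto_atBot_mono' atBot ?_ tendsto_id
    filter_upwards [eventually_le_atBot (-2 : ℝ)] with t ht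
    show -t ^ 2 / 2 ≤ t
    nlinarith
  have h1 : Tendsto (fun t : ℝ => Real.exp (-t ^ 2 / 2)) atBot (nhds 0) :=
    Real.tendsto_exp_atBot.comp h0
  have h2 := h1.const_mul (Real.sqrt (2 * Real.pi))⁻¹
  rw [mul_zero] at h2
  exact h2.congr fun z => rfl

lemma tendsto_Phi_atBot : Tendsto Phi atBot (nhds 0) := by
  apply tendsto_of_tendsto_of_tendsto_of_le_of_le' tendsto_const_nhds tendsto_phi_atBot
  · exact Eventually.of_forall fun z => (Phi_pos z).le
  · filter_upwards [eventually_le_atBot (-1 : ℝ)] with z hz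
    have h1 := mills_upper (show z < 0 by linarith)
    have h2 : phi z / (-z) ≤ phi z := by
      rw [div_le_iff₀ (by linarith)]
      nlinarith [phi_pos z]
    linarith

lemma tendsto_mul_phi_atBot : Tendsto (fun z => z * phi z) atBot (nhds 0) := by
  have hO := rpow_mul_exp_neg_mul_sq_isLittleO_exp_neg (b := 1/2) (by norm_num) 1
  have hg : Tendsto (fun x : ℝ => Real.exp (-(1/2) * x)) atTop (nhds 0) := by
    have hx : Tendsto (fun x : ℝ => -(1/2) * x) atTop atBot := by
      have := (tendsto_id (α := ℝ) (x := atTop)).atTop_mul_const (show (0:ℝ) < 1/2 by norm_num)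
      have h2 := tendsto_neg_atTop_atBot.comp this
      exact h2.congr fun x => by simp [Function.comp]; ring
    exact Real.tendsto_exp_atBot.comp hx
  have h1 : Tendsto (fun x : ℝ => x ^ (1:ℝ) * Real.exp (-(1/2) * x ^ 2)) atTop (nhds 0) :=
    hO.isBigO.trans_tendsto hg
  have h2 : Tendsto (fun x : ℝ => x * phi x) atTop (nhds 0) := by
    have : (fun x : ℝ => x * phi x) =ᶠ[atTop] fun x =>
        (Real.sqrt (2 * Real.pi))⁻¹ * (x ^ (1:ℝ) * Real.exp (-(1/2) * x ^ 2)) := by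
      filter_upwards [eventually_gt_atTop (0:ℝ)] with x hx
      rw [Real.rpow_one]
      unfold phi; ring_nf
    rw [tendsto_congr' this]
    simpa using h1.const_mul (Real.sqrt (2 * Real.pi))⁻¹
  have h3 : Tendsto (fun z : ℝ => -((-z) * phi (-z))) atBot (nhds 0) := by
    simpa using (h2.comp tendsto_neg_atBot_atTop).neg
  refine h3.congr fun z => ?_
  have : phi (-z) = phi z := by unfold phi; ring_nf
  rw [this]; ring

lemma aux_h_nonneg (z : ℝ) : 0 ≤ (1 + z ^ 2) * Phi z + z * phi z := by
  set h : ℝ → ℝ := fun z => (1 + z ^ 2) * Phi z + z * phi z with hh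
  have hd : ∀ x : ℝ, HasDerivAt h (2 * (x * Phi x + phi x)) x := by
    intro x
    have := (((hasDerivAt_pow 2 x).const_add 1).mul (hasDerivAt_Phi x)).add
      ((hasDerivAt_id' x).mul (hasDerivAt_phi x))
    refine this.congr_deriv ?_
    simp only [Nat.cast_ofNat, pow_one]
    ring
  have hmono : Monotone h := by
    refine monotone_of_deriv_nonneg (fun x => (hd x).differentiableAt) (fun x => ?_)
    rw [(hd x).deriv]
    have := zPhi_add_phi_nonneg x
    linarith
  have hlim : Tendsto h atBot (nhds 0) := by
    have hsq : Tendsto (fun z : ℝ => z ^ 2 * Phi z) atBot (nhds 0) := by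
      have hupper : Tendsto (fun z : ℝ => -z * phi z) atBot (nhds 0) := by
        have := tendsto_mul_phi_atBot.neg
        rw [neg_zero] at this
        exact this.congr fun z => by ring
      apply tendsto_of_tendsto_of_tendsto_of_le_of_le' tendsto_const_nhds hupper
      · exact Eventually.of_forall fun z => mul_nonneg (sq_nonneg z) (Phi_pos z).le
      · filter_upwards [eventually_le_atBot (-1 : ℝ)] with z hz
        have h1 := mills_upper (show z < 0 by linarith)
        have : z ^ 2 * Phi z ≤ z ^ 2 * (phi z / (-z)) :=
          mul_le_mul_of_nonneg_left h1 (by positivity)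
        have h2 : z ^ 2 * (phi z / (-z)) = -z * phi z := by
          have hz0 : z ≠ 0 := by linarith
          rw [mul_div_assoc', div_eq_iff (neg_ne_zero.mpr hz0)]
          ring
        rw [h2] at this
        linarith
    have := ((tendsto_Phi_atBot.add hsq).add tendsto_mul_phi_atBot)
    simpa [hh] using this.congr fun z => by ring
  exact le_of_tendsto hlim (by filter_upwards [eventually_le_atBot z] with t ht using hmono ht)

lemma G_nonneg (z : ℝ) : phi z ^ 2 + z * phi z * Phi z ≤ Phi z ^ 2 := by
  set G : ℝ → ℝ := fun z => Phi z ^ 2 - phi z ^ 2 - z * phi z * Phi z with hG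
  have hd : ∀ x : ℝ, HasDerivAt G (phi x * ((1 + x ^ 2) * Phi x + x * phi x)) x := by
    intro x
    have h1 := ((hasDerivAt_Phi x).pow 2).sub ((hasDerivAt_phi x).pow 2)
    have h2 := (((hasDerivAt_id x).mul (hasDerivAt_phi x)).mul (hasDerivAt_Phi x))
    have := h1.sub h2
    refine this.congr_deriv ?_
    simp only [Nat.cast_ofNat, pow_one, id_eq, Pi.mul_apply]
    ring
  have hmono : Monotone G := by
    refine monotone_of_deriv_nonneg (fun x => (hd x).differentiableAt) (fun x => ?_)
    rw [(hd x).deriv]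
    exact mul_nonneg (phi_pos x).le (aux_h_nonneg x)
  have hlim : Tendsto G atBot (nhds 0) := by
    have h1 : Tendsto (fun z : ℝ => z * phi z * Phi z) atBot (nhds 0) := by
      simpa using tendsto_mul_phi_atBot.mul tendsto_Phi_atBot
    have := ((tendsto_Phi_atBot.mul tendsto_Phi_atBot).sub
      (tendsto_phi_atBot.mul tendsto_phi_atBot)).sub h1
    simpa [hG] using this.congr fun z => by ring
  have : 0 ≤ G z :=
    le_of_tendsto hlim (by filter_upwards [eventually_le_atBot z] with t ht using hmono ht)
  simp only [hG] at this
  linarith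

lemma mills_lipschitz (x y : ℝ) : |phi x / Phi x - phi y / Phi y| ≤ |x - y| := by
  set r : ℝ → ℝ := fun z => phi z / Phi z with hr
  have hd : ∀ z : ℝ, HasDerivAt r ((-z * phi z * Phi z - phi z ^ 2) / Phi z ^ 2) z := by
    intro z
    have := (hasDerivAt_phi z).div (hasDerivAt_Phi z) (Phi_pos z).ne'
    refine this.congr_deriv ?_
    ring
  have hlip : LipschitzWith 1 r := by
    refine lipschitzWith_of_nnnorm_deriv_le (fun z => (hd z).differentiableAt) (fun z => ?_)
    rw [← NNReal.coe_le_coe, coe_nnnorm, NNReal.coe_one, (hd z).deriv]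
    have hP := Phi_pos z
    have h1 : 0 ≤ z * phi z * Phi z + phi z ^ 2 := by
      have := zPhi_add_phi_nonneg z
      nlinarith [phi_pos z]
    have h2 := G_nonneg z
    rw [Real.norm_eq_abs, abs_div, abs_of_pos (pow_pos hP 2), div_le_one (pow_pos hP 2),
      abs_le]
    constructor <;> nlinarith
  have := hlip.dist_le_mul x y
  simpa [Real.dist_eq] using this

lemma setIntegral_Iic_comp (f : ℝ → ℝ) (a σ c : ℝ) (hσ : 0 < σ) :
    ∫ x in Iic c, f x = σ * ∫ z in Iic ((c - a) / σ), f (a + σ * z) := by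
  have hg : MeasurableEmbedding (fun z : ℝ => a + σ * z) :=
    ((Homeomorph.mulLeft₀ σ hσ.ne').trans (Homeomorph.addLeft a)).measurableEmbedding
  have hmap : Measure.map (fun z : ℝ => a + σ * z) volume
      = ENNReal.ofReal σ⁻¹ • (volume : Measure ℝ) := by
    have : (fun z : ℝ => a + σ * z) = (fun x : ℝ => a + x) ∘ (fun z : ℝ => σ * z) := rfl
    rw [this, ← Measure.map_map (by fun_prop) (by fun_prop), Real.map_volume_mul_left hσ.ne',
      Measure.map_smul, map_add_left_eq_self, abs_of_pos (inv_pos.mpr hσ)]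
  have hpre : (fun z : ℝ => a + σ * z) ⁻¹' (Iic c) = Iic ((c - a) / σ) := by
    ext z
    simp only [mem_preimage, mem_Iic, le_div_iff₀ hσ]
    constructor <;> intro h <;> nlinarith
  have := hg.setIntegral_map (μ := volume) f (Iic c)
  rw [hmap, hpre] at this
  rw [← this]
  rw [Measure.restrict_smul, integral_smul_measure]
  simp only [ENNReal.toReal_ofReal (inv_pos.mpr hσ).le]
  rw [smul_eq_mul, ← mul_assoc, mul_inv_cancel₀ hσ.ne', one_mul]

lemma gauss_eq (a σ z : ℝ) (hσ : 0 < σ) : gauss a (σ ^ 2) (a + σ * z) = phi z / σ := by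
  unfold gauss phi
  have h1 : Real.sqrt (2 * Real.pi * σ ^ 2) = Real.sqrt (2 * Real.pi) * σ := by
    rw [Real.sqrt_mul (by positivity), Real.sqrt_sq hσ.le]
  rw [h1]
  have h2 : -(a + σ * z - a) ^ 2 / (2 * σ ^ 2) = -z ^ 2 / 2 := by
    field_simp
    ring
  rw [h2, mul_inv]
  ring

lemma denom_eq (a σ c : ℝ) (hσ : 0 < σ) :
    ∫ x in Iic c, gauss a (σ ^ 2) x = Phi ((c - a) / σ) := by
  rw [setIntegral_Iic_comp _ a σ c hσ]
  have : ∀ z, gauss a (σ ^ 2) (a + σ * z) = σ⁻¹ * phi z := fun z => by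
    rw [gauss_eq a σ z hσ]; ring
  simp_rw [this]
  rw [integral_const_mul, ← mul_assoc, mul_inv_cancel₀ hσ.ne', one_mul]
  rfl

lemma numer_eq (a σ c : ℝ) (hσ : 0 < σ) :
    ∫ x in Iic c, x * gauss a (σ ^ 2) x
      = a * Phi ((c - a) / σ) - σ * phi ((c - a) / σ) := by
  rw [setIntegral_Iic_comp _ a σ c hσ]
  set u := (c - a) / σ
  have : ∀ z, (a + σ * z) * gauss a (σ ^ 2) (a + σ * z)
      = σ⁻¹ * (a * phi z) + z * phi z := fun z => by
    rw [gauss_eq a σ z hσ]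
    field_simp
  simp_rw [this]
  rw [integral_add (((integrable_phi.const_mul a).const_mul σ⁻¹).integrableOn)
    integrable_mul_phi.integrableOn, integral_mul_phi_Iic, integral_const_mul,
    integral_const_mul]
  have : Phi u = ∫ z in Iic u, phi z := rfl
  rw [← this]
  field_simp
  ring

lemma truncMean_eq (a σ c : ℝ) (hσ : 0 < σ) :
    truncMean a (σ ^ 2) c = a - σ * (phi ((c - a) / σ) / Phi ((c - a) / σ)) := by
  unfold truncMean
  rw [numer_eq a σ c hσ, denom_eq a σ c hσ]
  have h := Phi_pos ((c - a) / σ)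
  field_simp

theorem iteration_map_contraction (μ1b μ2b σ γ ℓ : ℝ) (hσ : 0 < σ) (hγ : 0 < γ)
    (C : ℝ → ℝ) (hℓ0 : 0 < ℓ) (hℓ : ℓ < 1 / γ)
    (hLip : ∀ x y : ℝ, |C x - C y| ≤ ℓ * |x - y|) :
    (∀ x y : ℝ,
        |(μ2b - γ * (μ1b - truncMean μ1b (σ ^ 2) (C x))) -
            (μ2b - γ * (μ1b - truncMean μ1b (σ ^ 2) (C y)))| ≤ γ * ℓ * |x - y|) ∧
    0 < γ * ℓ ∧ γ * ℓ < 1 ∧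
    (∃! μ : ℝ, μ2b - γ * (μ1b - truncMean μ1b (σ ^ 2) (C μ)) = μ) := by
  have key : ∀ x y : ℝ,
      |(μ2b - γ * (μ1b - truncMean μ1b (σ ^ 2) (C x))) -
          (μ2b - γ * (μ1b - truncMean μ1b (σ ^ 2) (C y)))| ≤ γ * ℓ * |x - y| := by
    intro x y
    have hx := truncMean_eq μ1b σ (C x) hσ
    have hy := truncMean_eq μ1b σ (C y) hσ
    set ux := (C x - μ1b) / σ
    set uy := (C y - μ1b) / σ
    have hml := mills_lipschitz ux uy
    have huxy : |ux - uy| = |C x - C y| / σ := by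
      rw [← abs_of_pos hσ, ← abs_div]
      congr 1
      simp only [ux, uy]
      field_simp
      ring
    have : (μ2b - γ * (μ1b - truncMean μ1b (σ ^ 2) (C x))) -
        (μ2b - γ * (μ1b - truncMean μ1b (σ ^ 2) (C y)))
        = -γ * σ * (phi ux / Phi ux - phi uy / Phi uy) := by
      rw [hx, hy]; ring
    rw [this, abs_mul, abs_mul, abs_neg, abs_of_pos hγ, abs_of_pos hσ]
    calc γ * σ * |phi ux / Phi ux - phi uy / Phi uy|
        ≤ γ * σ * (|C x - C y| / σ) := by
          apply mul_le_mul_of_nonneg_left hml (by positivity) |>.trans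
          rw [huxy]
      _ = γ * |C x - C y| := by field_simp
      _ ≤ γ * (ℓ * |x - y|) := mul_le_mul_of_nonneg_left (hLip x y) hγ.le
      _ = γ * ℓ * |x - y| := by ring
  have hK1 : γ * ℓ < 1 := by
    have := (mul_lt_mul_of_pos_left hℓ hγ)
    rwa [mul_one_div, div_self hγ.ne'] at this
  refine ⟨key, mul_pos hγ hℓ0, hK1, ?_⟩
  set f : ℝ → ℝ := fun μ => μ2b - γ * (μ1b - truncMean μ1b (σ ^ 2) (C μ)) with hf
  have hcon : ContractingWith (⟨γ * ℓ, (mul_pos hγ hℓ0).le⟩ : NNReal) f := by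
    constructor
    · exact_mod_cast hK1
    · apply LipschitzWith.of_dist_le_mul
      intro x y
      simp only [Real.dist_eq, NNReal.coe_mk]
      exact key x y
  exact ⟨hcon.fixedPoint f, hcon.fixedPoint_isFixedPt,
    fun y hy => hcon.fixedPoint_unique hy⟩
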